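/- Let H be a finite group and g_A ∈ H. In D(H), the right residual symmetry algebra of the single-defect condensate |g_A⟩ in the magnetic representation Π^A_1 (A the conjugacy class of g_A, trivial centralizer representation) is spanned by {P_{h⟨g_A⟩} n : h ∈ H, n ∈ N_A}, i.e. T_r = F(H/⟨g_A⟩) ⊗ ℂ N_A, where ⟨g_A⟩ is the cyclic subgroup generated by g_A, N_A is the centralizer of g_A, and P_{h⟨g_A⟩} = Σ_{k ∈ h⟨g_A⟩} P_k. -/

import Mathlib

open scoped Classical

/-- The underlying vector space of the quantum double `D(H)`: functions `H × H → ℂ`,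
with `P_h g` corresponding to the indicator of `(h, g)`. -/
abbrev DH (H : Type*) : Type _ := H × H → ℂ

/-- The coproduct of `D(H)` in function form:
`Δ(f)(x₁,y₁; x₂,y₂) = f(x₁x₂, y₁) δ_{y₁}(y₂)`. -/
noncomputable def dComul {H : Type*} [Group H] (a : DH H) : (H × H) × (H × H) → ℂ :=
  fun q => a (q.1.1 * q.2.1, q.1.2) * (if q.2.2 = q.1.2 then 1 else 0)

/-- The action of the basis element `P_{x₂} y₂` of `D(H)` on a vector `φ` of a magnetic
representation (coefficients indexed by group elements):
`Π(P_h g)|g_i⟩ = δ_{h, g g_i g⁻¹} |g g_i g⁻¹⟩`. -/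
noncomputable def magAct {H : Type*} [Group H] (x₂ y₂ : H) (φ : H → ℂ) : H → ℂ :=
  fun k => (if k = x₂ then 1 else 0) * φ (y₂⁻¹ * k * y₂)

/-- Applying `(id ⊗ Π(·)φ)` to an element of `D(H) ⊗ D(H)` (in function form), landing in
`D(H) ⊗ V`, realized as functions `(H × H) × H → ℂ`. -/
noncomputable def applySecond {H : Type*} [Group H] [Fintype H]
    (F : (H × H) × (H × H) → ℂ) (φ : H → ℂ) : (H × H) × H → ℂ :=
  fun pk => ∑ x₂ : H, ∑ y₂ : H, F (pk.1, (x₂, y₂)) * magAct x₂ y₂ φ pk.2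

lemma phieq {H : Type*} [Group H] [Fintype H] (gA : H) (a : DH H) :
    applySecond (dComul a) (fun k => if k = gA then 1 else 0)
      = fun pk => a (pk.1.1 * pk.2, pk.1.2) *
          (if pk.1.2⁻¹ * pk.2 * pk.1.2 = gA then 1 else 0) := by
  funext pk
  simp only [applySecond, dComul, magAct]
  rw [Finset.sum_eq_single pk.2]
  · rw [Finset.sum_eq_single pk.1.2]
    · simp
    · intro y _ hy; simp [hy]
    · simp
  · intro x _ hx; simp [Ne.symm hx]
  · simp

/-- the right residual symmetry algebra of the single-defect condensate
`|g_A⟩` in the magnetic representation `Π^A_1` of `D(H)` equals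
`F(H/⟨g_A⟩) ⊗ ℂ N_A`: the span of the elements `P_{h⟨g_A⟩} n` with `h ∈ H` and
`n` in the centralizer of `g_A`. -/
theorem stmt16 {H : Type*} [Group H] [Fintype H] (gA : H) :
    {a : DH H |
        applySecond (dComul a) (fun k => if k = gA then 1 else 0) =
          fun pk => a pk.1 * (if pk.2 = gA then 1 else 0)} =
      ↑(Submodule.span ℂ
        {f : DH H | ∃ h n : H, n ∈ Subgroup.centralizer ({gA} : Set H) ∧
          f = fun p =>
            (if h⁻¹ * p.1 ∈ Subgroup.zpowers gA then 1 else 0) *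
            (if p.2 = n then (1 : ℂ) else 0)}) := by
  ext a
  simp only [Set.mem_setOf_eq, SetLike.mem_coe]
  rw [phieq gA a, funext_iff]
  constructor
  · intro ha
    have hpt : ∀ x y k : H, a (x * k, y) * (if y⁻¹ * k * y = gA then 1 else 0)
        = a (x, y) * (if k = gA then 1 else 0) := fun x y k => ha ((x, y), k)
    have K2 : ∀ y : H, y ∉ Subgroup.centralizer ({gA} : Set H) → ∀ x : H, a (x, y) = 0 := by
      intro y hy x
      have h := hpt x y gA
      have hne : y⁻¹ * gA * y ≠ gA := by
        intro hc
        apply hy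
        rw [Subgroup.mem_centralizer_iff]
        intro m hm
        rw [Set.mem_singleton_iff] at hm; subst hm
        have := congrArg (y * ·) hc
        simpa [mul_assoc] using this
      simpa [hne] using h.symm
    have K1 : ∀ y ∈ Subgroup.centralizer ({gA} : Set H), ∀ x : H,
        a (x * gA, y) = a (x, y) := by
      intro y hy x
      have hcomm : gA * y = y * gA := (Subgroup.mem_centralizer_iff.mp hy) gA rfl
      have hconj : y⁻¹ * gA * y = gA := by
        rw [mul_assoc, hcomm, ← mul_assoc, inv_mul_cancel, one_mul]
      simpa [hconj] using hpt x y gA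
    have K3 : ∀ y ∈ Subgroup.centralizer ({gA} : Set H), ∀ (m : ℤ) (x : H),
        a (x * gA ^ m, y) = a (x, y) := by
      intro y hy m
      induction m using Int.induction_on with
      | zero => simp
      | succ i ih =>
        intro x
        rw [zpow_add_one, ← mul_assoc, K1 y hy (x * gA ^ (i : ℤ)), ih x]
      | pred i ih =>
        intro x
        have h := K1 y hy (x * gA ^ (-(i : ℤ) - 1))
        rw [mul_assoc, ← zpow_add_one, sub_add_cancel] at h
        rw [← h, ih x]
    have hc0 : ((Fintype.card (Subgroup.zpowers gA) : ℂ)) ≠ 0 :=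
      Nat.cast_ne_zero.mpr Fintype.card_ne_zero
    have key : a = ((Fintype.card (Subgroup.zpowers gA) : ℂ))⁻¹ •
        ∑ h : H, ∑ n : H, a (h, n) •
          (fun p : H × H => (if h⁻¹ * p.1 ∈ Subgroup.zpowers gA then (1 : ℂ) else 0) *
            (if p.2 = n then (1 : ℂ) else 0)) := by
      funext p
      simp only [Pi.smul_apply, Finset.sum_apply, smul_eq_mul]
      have step1 : ∀ h : H,
          (∑ n : H, a (h, n) * ((if h⁻¹ * p.1 ∈ Subgroup.zpowers gA then (1 : ℂ) else 0) *
            (if p.2 = n then (1 : ℂ) else 0)))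
          = a (h, p.2) * (if h⁻¹ * p.1 ∈ Subgroup.zpowers gA then (1 : ℂ) else 0) := by
        intro h
        rw [Finset.sum_eq_single p.2]
        · simp
        · intro n _ hn; simp [Ne.symm hn]
        · simp
      rw [Finset.sum_congr rfl fun h _ => step1 h]
      by_cases hp2 : p.2 ∈ Subgroup.centralizer ({gA} : Set H)
      · have step2 : ∀ h : H,
            a (h, p.2) * (if h⁻¹ * p.1 ∈ Subgroup.zpowers gA then (1 : ℂ) else 0)
            = a p * (if h⁻¹ * p.1 ∈ Subgroup.zpowers gA then (1 : ℂ) else 0) := by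
          intro h
          by_cases hz : h⁻¹ * p.1 ∈ Subgroup.zpowers gA
          · obtain ⟨m, hm⟩ := hz
            have hm' : gA ^ m = h⁻¹ * p.1 := hm
            have hh : h = p.1 * gA ^ (-m) := by
              rw [zpow_neg, hm']; group
            rw [hh, K3 p.2 hp2 (-m) p.1]
          · simp [hz]
        rw [Finset.sum_congr rfl fun h _ => step2 h, ← Finset.mul_sum]
        have hcard : (∑ h : H, (if h⁻¹ * p.1 ∈ Subgroup.zpowers gA then (1 : ℂ) else 0))
            = (Fintype.card (Subgroup.zpowers gA) : ℂ) := by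
          have he := Fintype.sum_equiv ((Equiv.inv H).trans (Equiv.mulRight p.1))
            (fun h : H => if h⁻¹ * p.1 ∈ Subgroup.zpowers gA then (1 : ℂ) else 0)
            (fun u : H => if u ∈ Subgroup.zpowers gA then (1 : ℂ) else 0)
            (fun u => by simp)
          rw [he, Finset.sum_boole]
          simp [Fintype.card_subtype]
        rw [hcard]
        field_simp
      · have : ∀ h : H,
            a (h, p.2) * (if h⁻¹ * p.1 ∈ Subgroup.zpowers gA then (1 : ℂ) else 0) = 0 := by
          intro h; rw [K2 p.2 hp2 h, zero_mul]
        rw [Finset.sum_congr rfl fun h _ => this h]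
        have : a p = 0 := K2 p.2 hp2 p.1
        simp [this]
    rw [key]
    refine Submodule.smul_mem _ _ (Submodule.sum_mem _ fun h _ => Submodule.sum_mem _ fun n _ => ?_)
    by_cases hn : n ∈ Subgroup.centralizer ({gA} : Set H)
    · exact Submodule.smul_mem _ _ (Submodule.subset_span ⟨h, n, hn, rfl⟩)
    · rw [K2 n hn h, zero_smul]
      exact Submodule.zero_mem _
  · intro ha
    induction ha using Submodule.span_induction with
    | mem f hf =>
      obtain ⟨h, n, hn, rfl⟩ := hf
      rintro ⟨⟨x, y⟩, k⟩
      simp only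
      have hcomm : gA * n = n * gA := (Subgroup.mem_centralizer_iff.mp hn) gA rfl
      by_cases hy : y = n
      · subst hy
        simp only [if_pos rfl, mul_one]
        have hconj : ∀ k : H, (y⁻¹ * k * y = gA ↔ k = gA) := by
          intro k
          constructor
          · intro hk
            have : k = y * gA * y⁻¹ := by rw [← hk]; group
            rw [this, ← hcomm]
            group
          · rintro rfl
            rw [mul_assoc, hcomm, ← mul_assoc, inv_mul_cancel, one_mul]
        by_cases hk : k = gA
        · rw [if_pos ((hconj k).mpr hk), if_pos hk, hk]
          have : h⁻¹ * (x * gA) ∈ Subgroup.zpowers gA ↔ h⁻¹ * x ∈ Subgroup.zpowers gA := by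
            rw [← mul_assoc]
            exact (Subgroup.zpowers gA).mul_mem_cancel_right (Subgroup.mem_zpowers gA)
          simp [this]
        · rw [if_neg hk, if_neg (fun hc => hk ((hconj k).mp hc))]
          simp
      · simp [hy]
    | zero => intro pk; simp
    | add f g hf hg ihf ihg =>
      intro pk
      simp only [Pi.add_apply, add_mul, ihf pk, ihg pk]
    | smul c f hf ihf =>
      intro pk
      simp only [Pi.smul_apply, smul_eq_mul]
      rw [mul_assoc, ihf pk, mul_assoc]
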